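/- Let G₁ and G₂ be nut graphs with distinguished vertices v₁ ∈ V(G₁) and v₂ ∈ V(G₂). Then the coalescence of (G₁, v₁) and (G₂, v₂) is a nut graph. -/

import Mathlib

open scoped Classical

/-- A *nut graph*: a finite simple graph on at least 2 vertices whose real adjacency
matrix has nullity (kernel dimension) exactly 1 and such that every nonzero vector in
the kernel of the adjacency matrix has all entries nonzero. -/
def SimpleGraph.IsNut {V : Type*} [Fintype V] (G : SimpleGraph V) : Prop :=
  2 ≤ Fintype.card V ∧
  Module.finrank ℝ (LinearMap.ker (Matrix.mulVecLin (G.adjMatrix ℝ))) = 1 ∧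
  ∀ x : V → ℝ, Matrix.mulVecLin (G.adjMatrix ℝ) x = 0 → x ≠ 0 → ∀ v : V, x v ≠ 0

/-- The automorphism group of a simple graph, realised as the subgroup of the
permutations of the vertex set that preserve adjacency (and non-adjacency). -/
def SimpleGraph.autGroup {V : Type*} (G : SimpleGraph V) : Subgroup (Equiv.Perm V) where
  carrier := { σ | ∀ u v : V, G.Adj (σ u) (σ v) ↔ G.Adj u v }
  mul_mem' := by
    intro σ τ hσ hτ u v
    simpa [hσ (τ u) (τ v)] using hτ u v
  one_mem' := by intro u v; rfl
  inv_mem' := by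
    intro σ hσ u v
    have := hσ (σ⁻¹ u) (σ⁻¹ v)
    simpa using this.symm

/-- The coalescence of rooted graphs `(G₁, v₁)` and `(G₂, v₂)`: the disjoint union of
`G₁` and `G₂` with the roots `v₁` and `v₂` identified.  Its vertex set is
`V₁ ⊕ {w : V₂ // w ≠ v₂}`, with `v₁` playing the role of the identified root. -/
def SimpleGraph.coalescence {V₁ V₂ : Type*} (G₁ : SimpleGraph V₁) (G₂ : SimpleGraph V₂)
    (v₁ : V₁) (v₂ : V₂) : SimpleGraph (V₁ ⊕ {w : V₂ // w ≠ v₂}) where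
  Adj x y :=
    match x, y with
    | Sum.inl a, Sum.inl b => G₁.Adj a b
    | Sum.inl a, Sum.inr b => a = v₁ ∧ G₂.Adj v₂ b.1
    | Sum.inr a, Sum.inl b => b = v₁ ∧ G₂.Adj v₂ a.1
    | Sum.inr a, Sum.inr b => G₂.Adj a.1 b.1
  symm := ⟨by
    rintro (a | a) (b | b) h
    · exact G₁.adj_symm h
    · exact h
    · exact h
    · exact G₂.adj_symm h⟩
  loopless := ⟨by
    rintro (a | a) h
    · exact G₁.irrefl h
    · exact G₂.irrefl h⟩

section CoalNutAux

open Finset Matrix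

variable {V₁ V₂ : Type*} [Fintype V₁] [Fintype V₂]
variable (G₁ : SimpleGraph V₁) (G₂ : SimpleGraph V₂) (v₁ : V₁) (v₂ : V₂)

lemma coal_adj_inl_inl (a b : V₁) :
    (G₁.coalescence G₂ v₁ v₂).Adj (Sum.inl a) (Sum.inl b) ↔ G₁.Adj a b := Iff.rfl

lemma coal_adj_inl_inr (a : V₁) (b : {w : V₂ // w ≠ v₂}) :
    (G₁.coalescence G₂ v₁ v₂).Adj (Sum.inl a) (Sum.inr b) ↔ a = v₁ ∧ G₂.Adj v₂ b.1 := Iff.rfl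

lemma coal_adj_inr_inl (a : {w : V₂ // w ≠ v₂}) (b : V₁) :
    (G₁.coalescence G₂ v₁ v₂).Adj (Sum.inr a) (Sum.inl b) ↔ b = v₁ ∧ G₂.Adj v₂ a.1 := Iff.rfl

lemma coal_adj_inr_inr (a b : {w : V₂ // w ≠ v₂}) :
    (G₁.coalescence G₂ v₁ v₂).Adj (Sum.inr a) (Sum.inr b) ↔ G₂.Adj a.1 b.1 := Iff.rfl

lemma mulVec_adj {V : Type*} [Fintype V] (G : SimpleGraph V) (x : V → ℝ) (v : V) :
    (G.adjMatrix ℝ).mulVec x v = ∑ u, if G.Adj v u then x u else 0 := by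
  simp [Matrix.mulVec, dotProduct, ite_mul]

/-- Extend a vector on the coalescence to a vector on `V₂`. -/
noncomputable def ext2 (x : V₁ ⊕ {w : V₂ // w ≠ v₂} → ℝ) : V₂ → ℝ :=
  fun u => if h : u = v₂ then x (Sum.inl v₁) else x (Sum.inr ⟨u, h⟩)

lemma ext2_ne (x : V₁ ⊕ {w : V₂ // w ≠ v₂} → ℝ) (w : {w : V₂ // w ≠ v₂}) :
    ext2 v₁ v₂ x w.1 = x (Sum.inr w) := by
  simp [ext2, w.2]

lemma ext2_root (x : V₁ ⊕ {w : V₂ // w ≠ v₂} → ℝ) :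
    ext2 v₁ v₂ x v₂ = x (Sum.inl v₁) := by simp [ext2]

/-- Sum over `V₂` of an `if Adj` expression, in terms of the subtype sum. -/
lemma sum_V2_split (P : V₂ → Prop) (x : V₁ ⊕ {w : V₂ // w ≠ v₂} → ℝ) :
    (∑ u : V₂, if P u then ext2 v₁ v₂ x u else 0)
      = (∑ w : {w : V₂ // w ≠ v₂}, if P w.1 then x (Sum.inr w) else 0)
        + (if P v₂ then x (Sum.inl v₁) else 0) := by
  classical
  rw [← Finset.sum_erase_add (Finset.univ) _ (Finset.mem_univ v₂), ext2_root]
  congr 1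
  rw [Finset.sum_subtype (p := fun u => u ≠ v₂) (Finset.univ.erase v₂)
    (by intro u; simp [Finset.mem_erase]) (fun u => if P u then ext2 v₁ v₂ x u else 0)]
  refine Finset.sum_congr rfl fun w _ => ?_
  rw [ext2_ne]

lemma key_inl (x : V₁ ⊕ {w : V₂ // w ≠ v₂} → ℝ) (a : V₁) :
    ((G₁.coalescence G₂ v₁ v₂).adjMatrix ℝ).mulVec x (Sum.inl a)
      = (G₁.adjMatrix ℝ).mulVec (fun b => x (Sum.inl b)) a
        + (if a = v₁ then (G₂.adjMatrix ℝ).mulVec (ext2 v₁ v₂ x) v₂ else 0) := by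
  classical
  have e1 : (∑ b : V₁, if (G₁.coalescence G₂ v₁ v₂).Adj (Sum.inl a) (Sum.inl b)
        then x (Sum.inl b) else 0)
      = (G₁.adjMatrix ℝ).mulVec (fun b => x (Sum.inl b)) a := by
    rw [mulVec_adj]
    exact Finset.sum_congr rfl fun b _ => if_congr (coal_adj_inl_inl G₁ G₂ v₁ v₂ a b) rfl rfl
  have e2 : (∑ w : {w : V₂ // w ≠ v₂}, if (G₁.coalescence G₂ v₁ v₂).Adj (Sum.inl a) (Sum.inr w)
        then x (Sum.inr w) else 0)
      = (if a = v₁ then (G₂.adjMatrix ℝ).mulVec (ext2 v₁ v₂ x) v₂ else 0) := by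
    rw [mulVec_adj, sum_V2_split v₁ v₂ (G₂.Adj v₂) x, if_neg (show ¬ G₂.Adj v₂ v₂ from G₂.irrefl), add_zero]
    by_cases ha : a = v₁
    · rw [if_pos ha]
      refine Finset.sum_congr rfl fun w _ => ?_
      rw [if_congr (coal_adj_inl_inr G₁ G₂ v₁ v₂ a w) rfl rfl]
      simp [ha]
    · rw [if_neg ha]
      refine Finset.sum_eq_zero fun w _ => ?_
      rw [if_congr (coal_adj_inl_inr G₁ G₂ v₁ v₂ a w) rfl rfl, if_neg (by tauto)]
  rw [mulVec_adj, Fintype.sum_sum_type, e1, e2]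

lemma key_inr (x : V₁ ⊕ {w : V₂ // w ≠ v₂} → ℝ) (w : {w : V₂ // w ≠ v₂}) :
    ((G₁.coalescence G₂ v₁ v₂).adjMatrix ℝ).mulVec x (Sum.inr w)
      = (G₂.adjMatrix ℝ).mulVec (ext2 v₁ v₂ x) w.1 := by
  classical
  have e1 : (∑ u : {w : V₂ // w ≠ v₂}, if (G₁.coalescence G₂ v₁ v₂).Adj (Sum.inr w) (Sum.inr u)
        then x (Sum.inr u) else 0)
      = ∑ u : {w : V₂ // w ≠ v₂}, if G₂.Adj w.1 u.1 then x (Sum.inr u) else 0 :=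
    Finset.sum_congr rfl fun u _ => if_congr (coal_adj_inr_inr G₁ G₂ v₁ v₂ w u) rfl rfl
  have e2 : (∑ b : V₁, if (G₁.coalescence G₂ v₁ v₂).Adj (Sum.inr w) (Sum.inl b)
        then x (Sum.inl b) else 0)
      = if G₂.Adj w.1 v₂ then x (Sum.inl v₁) else 0 := by
    have h : ∀ b : V₁, (if (G₁.coalescence G₂ v₁ v₂).Adj (Sum.inr w) (Sum.inl b)
          then x (Sum.inl b) else 0)
        = if b = v₁ then (if G₂.Adj w.1 v₂ then x (Sum.inl v₁) else 0) else 0 := by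
      intro b
      rw [if_congr (coal_adj_inr_inl G₁ G₂ v₁ v₂ w b) rfl rfl, ite_and]
      by_cases hb : b = v₁
      · subst hb
        simp [G₂.adj_comm]
      · simp [hb]
    rw [Finset.sum_congr rfl (fun b _ => h b), Finset.sum_ite_eq' Finset.univ v₁]
    simp
  rw [mulVec_adj, Fintype.sum_sum_type, e1, e2, mulVec_adj,
    sum_V2_split v₁ v₂ (G₂.Adj w.1) x]
  exact add_comm _ _

/-- In a nut graph, there is a kernel vector all of whose entries are nonzero,
and every kernel vector is a multiple of it. -/
lemma nut_exists_core {V : Type*} [Fintype V] {G : SimpleGraph V} (h : G.IsNut) :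
    ∃ c : V → ℝ, (G.adjMatrix ℝ).mulVec c = 0 ∧ (∀ v, c v ≠ 0) ∧
      ∀ y : V → ℝ, (G.adjMatrix ℝ).mulVec y = 0 → ∃ t : ℝ, y = t • c := by
  classical
  obtain ⟨-, hrank, hker⟩ := h
  have hne : LinearMap.ker (Matrix.mulVecLin (G.adjMatrix ℝ)) ≠ ⊥ := by
    intro hbot
    rw [hbot] at hrank
    simp at hrank
  obtain ⟨c, hcK, hc0⟩ := Submodule.exists_mem_ne_zero_of_ne_bot hne
  have hcmem : Matrix.mulVecLin (G.adjMatrix ℝ) c = 0 := LinearMap.mem_ker.mp hcK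
  have hcker : (G.adjMatrix ℝ).mulVec c = 0 := by
    rwa [Matrix.mulVecLin_apply] at hcmem
  have hle : Submodule.span ℝ {c} ≤ LinearMap.ker (Matrix.mulVecLin (G.adjMatrix ℝ)) := by
    rw [Submodule.span_singleton_le_iff_mem]; exact hcK
  have hspan : Submodule.span ℝ {c} = LinearMap.ker (Matrix.mulVecLin (G.adjMatrix ℝ)) :=
    Submodule.eq_of_le_of_finrank_eq hle (by rw [finrank_span_singleton hc0, hrank])
  refine ⟨c, hcker, hker c hcmem hc0, ?_⟩
  intro yv hyv
  have : yv ∈ Submodule.span ℝ ({c} : Set (V → ℝ)) := by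
    rw [hspan]
    exact LinearMap.mem_ker.mpr (by rw [Matrix.mulVecLin_apply]; exact hyv)
  obtain ⟨t, ht⟩ := Submodule.mem_span_singleton.mp this
  exact ⟨t, ht.symm⟩

lemma dot_kernel {V : Type*} [Fintype V] (G : SimpleGraph V) (c y : V → ℝ)
    (hc : (G.adjMatrix ℝ).mulVec c = 0) :
    dotProduct c ((G.adjMatrix ℝ).mulVec y) = 0 := by
  rw [dotProduct_mulVec, ← (SimpleGraph.isSymm_adjMatrix G).eq,
    Matrix.vecMul_transpose, hc]
  simp

end CoalNutAux

/-- The coalescence of two nut graphs is a nut graph. -/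
theorem coalescence_isNut {V₁ V₂ : Type*} [Fintype V₁] [Fintype V₂]
    (G₁ : SimpleGraph V₁) (G₂ : SimpleGraph V₂) (v₁ : V₁) (v₂ : V₂)
    (h₁ : G₁.IsNut) (h₂ : G₂.IsNut) :
    (G₁.coalescence G₂ v₁ v₂).IsNut := by
  classical
  obtain ⟨c₁, hc₁, hc₁ne, hc₁span⟩ := nut_exists_core h₁
  obtain ⟨c₂, hc₂, hc₂ne, hc₂span⟩ := nut_exists_core h₂
  set y : V₁ ⊕ {w : V₂ // w ≠ v₂} → ℝ :=
    Sum.elim (fun a => c₂ v₂ * c₁ a) (fun w => c₁ v₁ * c₂ w.1) with hy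
  have hy1 : (fun b => y (Sum.inl b)) = c₂ v₂ • c₁ := by
    funext b; simp [hy]
  have hy2 : ext2 v₁ v₂ y = c₁ v₁ • c₂ := by
    funext u
    by_cases h : u = v₂
    · subst h; simp [ext2, hy, mul_comm]
    · simp [ext2, h, hy]
  have hyker : Matrix.mulVecLin ((G₁.coalescence G₂ v₁ v₂).adjMatrix ℝ) y = 0 := by
    rw [Matrix.mulVecLin_apply]
    funext p
    rcases p with a | w
    · rw [key_inl, hy1, hy2, Matrix.mulVec_smul, Matrix.mulVec_smul, hc₁, hc₂]
      simp
    · rw [key_inr, hy2, Matrix.mulVec_smul, hc₂]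
      simp
  have hyne : y ≠ 0 := by
    intro h
    have := congrFun h (Sum.inl v₁)
    simp [hy] at this
    rcases this with h' | h'
    · exact hc₂ne v₂ h'
    · exact hc₁ne v₁ h'
  have hmain : ∀ x : V₁ ⊕ {w : V₂ // w ≠ v₂} → ℝ,
      Matrix.mulVecLin ((G₁.coalescence G₂ v₁ v₂).adjMatrix ℝ) x = 0 →
      ∃ t : ℝ, x = t • y := by
    intro x hx
    rw [Matrix.mulVecLin_apply] at hx
    have hx' : ∀ p, ((G₁.coalescence G₂ v₁ v₂).adjMatrix ℝ).mulVec x p = 0 :=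
      fun p => congrFun hx p
    have h2 : ∀ u : V₂, u ≠ v₂ → (G₂.adjMatrix ℝ).mulVec (ext2 v₁ v₂ x) u = 0 := by
      intro u hu
      have := hx' (Sum.inr ⟨u, hu⟩)
      rwa [key_inr] at this
    set s := (G₂.adjMatrix ℝ).mulVec (ext2 v₁ v₂ x) v₂ with hs
    have h1 : ∀ a : V₁, a ≠ v₁ →
        (G₁.adjMatrix ℝ).mulVec (fun b => x (Sum.inl b)) a = 0 := by
      intro a ha
      have := hx' (Sum.inl a)
      rwa [key_inl, if_neg ha, add_zero] at this
    have h1v : (G₁.adjMatrix ℝ).mulVec (fun b => x (Sum.inl b)) v₁ = -s := by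
      have := hx' (Sum.inl v₁)
      rw [key_inl, if_pos rfl, ← hs] at this
      linarith
    have hdot := dot_kernel G₁ c₁ (fun b => x (Sum.inl b)) hc₁
    have hdot' : ∑ a, c₁ a * (G₁.adjMatrix ℝ).mulVec (fun b => x (Sum.inl b)) a = 0 := by
      simpa [dotProduct] using hdot
    have hsum : ∑ a, c₁ a * (G₁.adjMatrix ℝ).mulVec (fun b => x (Sum.inl b)) a
        = c₁ v₁ * (-s) := by
      rw [Finset.sum_eq_single v₁ (fun a _ ha => by rw [h1 a ha, mul_zero])
        (fun h => absurd (Finset.mem_univ v₁) h), h1v]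
    have hs0 : s = 0 := by
      have h0 : c₁ v₁ * (-s) = 0 := by rw [← hsum]; exact hdot'
      rcases mul_eq_zero.mp h0 with h | h
      · exact absurd h (hc₁ne v₁)
      · linarith
    have hA1 : (G₁.adjMatrix ℝ).mulVec (fun b => x (Sum.inl b)) = 0 := by
      funext a
      by_cases ha : a = v₁
      · subst ha; rw [h1v, hs0, neg_zero]; rfl
      · rw [h1 a ha]; rfl
    have hA2 : (G₂.adjMatrix ℝ).mulVec (ext2 v₁ v₂ x) = 0 := by
      funext u
      by_cases hu : u = v₂
      · subst hu; rw [← hs, hs0]; rfl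
      · rw [h2 u hu]; rfl
    obtain ⟨t₁, ht₁⟩ := hc₁span _ hA1
    obtain ⟨t₂, ht₂⟩ := hc₂span _ hA2
    have e1 : ∀ a, x (Sum.inl a) = t₁ * c₁ a := fun a => congrFun ht₁ a
    have e2 : ∀ u, ext2 v₁ v₂ x u = t₂ * c₂ u := fun u => congrFun ht₂ u
    have hmatch : t₁ * c₁ v₁ = t₂ * c₂ v₂ := by
      rw [← e1 v₁, ← e2 v₂, ext2_root]
    refine ⟨t₁ / c₂ v₂, ?_⟩
    funext p
    rcases p with a | w
    · have : x (Sum.inl a) = t₁ * c₁ a := e1 a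
      simp only [hy, Pi.smul_apply, Sum.elim_inl, smul_eq_mul, this]
      rw [div_mul_eq_mul_div, eq_div_iff (hc₂ne v₂)]
      ring
    · have hxw : x (Sum.inr w) = t₂ * c₂ w.1 := by
        rw [← ext2_ne v₁ v₂ x w, e2]
      simp only [hy, Pi.smul_apply, Sum.elim_inr, smul_eq_mul, hxw]
      rw [div_mul_eq_mul_div, eq_div_iff (hc₂ne v₂)]
      linear_combination (- c₂ w.1) * hmatch
  obtain ⟨hcard₁, -, -⟩ := h₁
  refine ⟨?_, ?_, ?_⟩
  · rw [Fintype.card_sum]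
    exact le_trans hcard₁ (Nat.le_add_right _ _)
  · have hker_eq : LinearMap.ker
        (Matrix.mulVecLin ((G₁.coalescence G₂ v₁ v₂).adjMatrix ℝ))
        = Submodule.span ℝ {y} := by
      apply le_antisymm
      · intro x hx
        obtain ⟨t, ht⟩ := hmain x (LinearMap.mem_ker.mp hx)
        exact Submodule.mem_span_singleton.mpr ⟨t, ht.symm⟩
      · rw [Submodule.span_singleton_le_iff_mem]
        exact LinearMap.mem_ker.mpr hyker
    rw [hker_eq, finrank_span_singleton hyne]
  · intro x hxker hx0 p
    obtain ⟨t, ht⟩ := hmain x hxker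
    have ht0 : t ≠ 0 := by
      intro h
      apply hx0
      rw [ht, h, zero_smul]
    subst ht
    rcases p with a | w
    · simp only [hy, Pi.smul_apply, Sum.elim_inl, smul_eq_mul]
      exact mul_ne_zero ht0 (mul_ne_zero (hc₂ne v₂) (hc₁ne a))
    · simp only [hy, Pi.smul_apply, Sum.elim_inr, smul_eq_mul]
      exact mul_ne_zero ht0 (mul_ne_zero (hc₁ne v₁) (hc₂ne w.1))
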